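/- arXiv:2003.04785 — 2 statements merged into one kernel-verified Lean document; each statement's English description precedes it below -/
import Mathlib

section
/- Let L be a Lie algebra over F equipped with a grading L = ⊕_{i≥1} L(i) by subspaces satisfying [L(i), L(j)] ⊆ L(i+j) for all i,j ≥ 1, and assume L is nilpotent. Let I be a set of nonzero homogeneous elements of L, let P be the Lie subalgebra of L generated by I, and let x ↦ x′ be an injective map from I to L such that for every x ∈ I ∩ L(i) one has x′ ∈ ⊕_{j≥i} L(j) and x′ − x ∈ ⊕_{j≥i+1} L(j). Let R be the Lie subalgebra of L generated by { x′ : x ∈ I }. Then R is nilpotent and the nilpotency degree of P is at most the nilpotency degree of R. -/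
open scoped Classical

noncomputable section

namespace Paper

attribute [local instance 100] LieRing.ofAssociativeRing

variable {F : Type*}

/-- Offset (starting global index) of the `i`-th block. -/
def off {k : ℕ} (dv : Fin k → ℕ) (i : Fin k) : ℕ := ∑ t ∈ Finset.Iio i, dv t

/-- Total size `d = d₁ + ⋯ + d_k`. -/
def dtot {k : ℕ} (dv : Fin k → ℕ) : ℕ := ∑ t, dv t

theorem off_add_lt {k : ℕ} (dv : Fin k → ℕ) (i : Fin k) (r : Fin (dv i)) :
    off dv i + (r : ℕ) < dtot dv := by
  have h1 : off dv i + dv i ≤ dtot dv := by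
    have h : off dv i + dv i = ∑ t ∈ insert i (Finset.Iio i), dv t := by
      rw [Finset.sum_insert (by simp), add_comm]
      rfl
    rw [h]
    exact Finset.sum_le_sum_of_subset (Finset.subset_univ _)
  have := r.isLt
  omega

/-- The global index of the `r`-th row/column of the `i`-th block. -/
def emb {k : ℕ} (dv : Fin k → ℕ) (i : Fin k) (r : Fin (dv i)) : Fin (dtot dv) :=
  ⟨off dv i + r, off_add_lt dv i r⟩

/-- The projection `p_{i,j}` onto the `(i,j)`-block. -/
def blk {k : ℕ} (dv : Fin k → ℕ) (i j : Fin k)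
    (A : Matrix (Fin (dtot dv)) (Fin (dtot dv)) F) :
    Matrix (Fin (dv i)) (Fin (dv j)) F :=
  Matrix.of fun r s => A (emb dv i r) (emb dv j s)

/-- The `p × p` upper triangular Jordan block `J^p(α)`. -/
def Jord [Field F] (p : ℕ) (α : F) : Matrix (Fin p) (Fin p) F :=
  Matrix.of fun a b =>
    if (b : ℕ) = (a : ℕ) then α else if (b : ℕ) = (a : ℕ) + 1 then 1 else 0

/-- The matrix whose `(i,j)` block is `M` and all other blocks vanish. -/
def embMat [Field F] {k : ℕ} (dv : Fin k → ℕ) (i j : Fin k)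
    (M : Matrix (Fin (dv i)) (Fin (dv j)) F) :
    Matrix (Fin (dtot dv)) (Fin (dtot dv)) F :=
  Matrix.of fun x y => ∑ r, ∑ s, if x = emb dv i r ∧ y = emb dv j s then M r s else 0

/-- The block diagonal matrix `D(α,λ) = J^{d₁}(α) ⊕ J^{d₂}(α-λ) ⊕ ⋯ ⊕ J^{d_k}(α-(k-1)λ)`. -/
def Dmat [Field F] {k : ℕ} (dv : Fin k → ℕ) (α lam : F) :
    Matrix (Fin (dtot dv)) (Fin (dtot dv)) F :=
  ∑ i : Fin k, embMat dv i i (Jord (dv i) (α - ((i : ℕ) : F) * lam))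

/-- `A` is the matrix `E(S)` of an admissible sequence `S`:  all blocks vanish except the
blocks `p_{i,i+1}`, and each block `p_{i,i+1}` has nonzero lower-left (i.e. `(dᵢ,1)`) entry. -/
def IsEShaped [Field F] {k : ℕ} (dv : Fin k → ℕ)
    (A : Matrix (Fin (dtot dv)) (Fin (dtot dv)) F) : Prop :=
  (∀ i j : Fin k, (j : ℕ) ≠ (i : ℕ) + 1 → blk dv i j A = 0) ∧
  (∀ i j : Fin k, (j : ℕ) = (i : ℕ) + 1 →
    ∀ (hr : dv i - 1 < dv i) (hs : 0 < dv j),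
      A (emb dv i ⟨dv i - 1, hr⟩) (emb dv j ⟨0, hs⟩) ≠ 0)

/-- The matrix `E(C)` of the canonical sequence `C`. -/
def CanE (F : Type*) [Field F] {k : ℕ} (dv : Fin k → ℕ) :
    Matrix (Fin (dtot dv)) (Fin (dtot dv)) F :=
  Matrix.of fun x y =>
    if ∃ i j : Fin k, (j : ℕ) = (i : ℕ) + 1 ∧
        (x : ℕ) = off dv i + (dv i - 1) ∧ (y : ℕ) = off dv j
    then 1 else 0

/-- The Lie subalgebra `h(α,λ,S)` of `gl(d,F)` generated by `D(α,λ)` and `E(S) = A`. -/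
def hAlg (F : Type*) [Field F] {k : ℕ} (dv : Fin k → ℕ) (α lam : F)
    (A : Matrix (Fin (dtot dv)) (Fin (dtot dv)) F) :
    LieSubalgebra F (Matrix (Fin (dtot dv)) (Fin (dtot dv)) F) :=
  LieSubalgebra.lieSpan F _ {Dmat dv α lam, A}

/-- The Lie subalgebra `n(S)` generated by the matrices `(ad D(0,0))^l (E(S))`, `l ≥ 0`. -/
def nAlg (F : Type*) [Field F] {k : ℕ} (dv : Fin k → ℕ)
    (A : Matrix (Fin (dtot dv)) (Fin (dtot dv)) F) :
    LieSubalgebra F (Matrix (Fin (dtot dv)) (Fin (dtot dv)) F) :=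
  LieSubalgebra.lieSpan F _ {X | ∃ l : ℕ, X = (fun Y => ⁅Dmat dv (0 : F) 0, Y⁆)^[l] A}

/-- `r_{i,j}`:  `0` if the `(i,j)`-blocks of all members of `h(0,0,C)` vanish, and otherwise
the minimal rank of a nonzero `(i,j)`-block of a member of `h(0,0,C)`. -/
def rr (F : Type*) [Field F] {k : ℕ} (dv : Fin k → ℕ) (i j : Fin k) : ℕ :=
  if ∀ X ∈ hAlg F dv 0 0 (CanE F dv), blk dv i j X = 0 then 0
  else sInf {n | ∃ X ∈ hAlg F dv 0 0 (CanE F dv),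
    blk dv i j X ≠ 0 ∧ (blk dv i j X).rank = n}

/-- The automorphism `φ(A)_{i,j} = (−1)^{i−j+1} A_{d+1−j,d+1−i}` (here written 0-indexed). -/
def Phi (F : Type*) [Field F] (d : ℕ) (A : Matrix (Fin d) (Fin d) F) :
    Matrix (Fin d) (Fin d) F :=
  Matrix.of fun x y =>
    (-1 : F) ^ ((x : ℕ) + (y : ℕ) + 1) *
      A ⟨d - 1 - (y : ℕ), by have := y.isLt; omega⟩ ⟨d - 1 - (x : ℕ), by have := x.isLt; omega⟩

/-- `d⃗` is symmetric: `dᵢ = d_{k+1−i}` for all `i` (0-indexed: `dᵢ = d_{k-1-i}`). -/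
def SymmSeq {k : ℕ} (dv : Fin k → ℕ) : Prop :=
  ∀ i j : Fin k, (i : ℕ) + (j : ℕ) = k - 1 → dv i = dv j

/-- `d⃗` is odd-symmetric: symmetric, `k` odd and the middle `d_{(k+1)/2}` odd. -/
def OddSymmSeq {k : ℕ} (dv : Fin k → ℕ) : Prop :=
  SymmSeq dv ∧ Odd k ∧ ∀ i : Fin k, 2 * (i : ℕ) = k - 1 → Odd (dv i)

/-- Conditions (1) and (2) of Definition `Normalized` (weak normalization), expressed on the
matrix `A = E(S)`, so that `S(i)_{a,b} = A (emb i a) (emb (i+1) b)` (0-indexed). -/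
def IsWeaklyNormalized [Field F] {k : ℕ} (dv : Fin k → ℕ)
    (A : Matrix (Fin (dtot dv)) (Fin (dtot dv)) F) : Prop :=
  (∀ i j : Fin k, (j : ℕ) = (i : ℕ) + 1 →
      ∀ (hr : dv i - 1 < dv i) (hs : 0 < dv j),
        A (emb dv i ⟨dv i - 1, hr⟩) (emb dv j ⟨0, hs⟩) = 1) ∧
  (∀ i j l : Fin k, (j : ℕ) = (i : ℕ) + 1 → (l : ℕ) = (j : ℕ) + 1 →
      ∀ (hr : dv i - 1 < dv i) (s : Fin (dv j)) (hs : dv j - 1 - (s : ℕ) < dv j)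
        (h0 : 0 < dv l),
        A (emb dv i ⟨dv i - 1, hr⟩) (emb dv j s) =
          A (emb dv j ⟨dv j - 1 - (s : ℕ), hs⟩) (emb dv l ⟨0, h0⟩))

/-- The sequence `S` (given through its matrix `A = E(S)`) is normalized. -/
def IsNormalized [Field F] {k : ℕ} (dv : Fin k → ℕ)
    (A : Matrix (Fin (dtot dv)) (Fin (dtot dv)) F) : Prop :=
  IsWeaklyNormalized dv A ∧
  (∀ i j : Fin k, (i : ℕ) = 0 → (j : ℕ) = 1 →
      ∀ (r : Fin (dv i)) (hs : 0 < dv j), (r : ℕ) ≠ dv i - 1 →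
        A (emb dv i r) (emb dv j ⟨0, hs⟩) = 0) ∧
  (∀ i j : Fin k, (j : ℕ) = (i : ℕ) + 1 → (j : ℕ) = k - 1 →
      ∀ (hr : dv i - 1 < dv i) (s : Fin (dv j)), (s : ℕ) ≠ 0 →
        A (emb dv i ⟨dv i - 1, hr⟩) (emb dv j s) = 0)

/-- Membership in the group `G(d⃗)`: a block diagonal matrix each of whose diagonal blocks is
a polynomial with nonzero constant term evaluated at `J^{dᵢ}(0)`. -/
def InG (F : Type*) [Field F] {k : ℕ} (dv : Fin k → ℕ)
    (P : Matrix (Fin (dtot dv)) (Fin (dtot dv)) F) : Prop :=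
  IsUnit P ∧ ∃ q : Fin k → Polynomial F, (∀ i, (q i).coeff 0 ≠ 0) ∧
    P = ∑ i : Fin k, embMat dv i i (Polynomial.aeval (Jord (dv i) (0 : F)) (q i))

/-- The nilpotency degree of a Lie algebra: the least `m` with `L^m = 0` in the lower central
series `L^0 = L`, `L^{i+1} = [L, L^i]`. -/
def nilDeg (F : Type*) (L : Type*) [Field F] [LieRing L] [LieAlgebra F L] : ℕ :=
  sInf {m | LieModule.lowerCentralSeries F L L m = ⊥}


/-- `⁅lcs i, lcs j⁆ ⊆ lcs (i+j+1)` for a Lie algebra over itself. -/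
theorem lcs_lie_mem {𝕜 M : Type*} [Field 𝕜] [LieRing M] [LieAlgebra 𝕜 M] :
    ∀ (j i : ℕ) (x y : M), x ∈ LieModule.lowerCentralSeries 𝕜 M M i →
      y ∈ LieModule.lowerCentralSeries 𝕜 M M j →
      ⁅x, y⁆ ∈ LieModule.lowerCentralSeries 𝕜 M M (i + j + 1) := by
  intro j
  induction j with
  | zero =>
    intro i x y hx _
    have : ⁅x, y⁆ = -⁅y, x⁆ := by rw [lie_skew]
    rw [this, LieModule.lowerCentralSeries_succ]
    exact neg_mem (LieSubmodule.lie_mem_lie (LieSubmodule.mem_top y) hx)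
  | succ j ih =>
    intro i x y hx hy
    rw [LieModule.lowerCentralSeries_succ, ← LieSubmodule.mem_toSubmodule,
      LieSubmodule.lieIdeal_oper_eq_linear_span'] at hy
    induction hy using Submodule.span_induction with
    | mem z hz =>
      obtain ⟨a, -, c, hc, rfl⟩ := hz
      have h1 : ⁅x, ⁅a, c⁆⁆ = ⁅⁅x, a⁆, c⁆ + ⁅a, ⁅x, c⁆⁆ := leibniz_lie x a c
      rw [h1]
      apply add_mem
      · have hxa : ⁅x, a⁆ ∈ LieModule.lowerCentralSeries 𝕜 M M (i + 1) := by
          have : ⁅x, a⁆ = -⁅a, x⁆ := by rw [lie_skew]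
          rw [this, LieModule.lowerCentralSeries_succ]
          exact neg_mem (LieSubmodule.lie_mem_lie (LieSubmodule.mem_top a) hx)
        have := ih (i + 1) ⁅x, a⁆ c hxa hc
        have he : i + 1 + j + 1 = i + (j + 1) + 1 := by omega
        rwa [he] at this
      · have hxc := ih i x c hx hc
        rw [show i + (j + 1) + 1 = (i + j + 1) + 1 by omega, LieModule.lowerCentralSeries_succ]
        exact LieSubmodule.lie_mem_lie (LieSubmodule.mem_top a) hxc
    | zero => simp
    | add u v _ _ hu hv => rw [lie_add]; exact add_mem hu hv
    | smul a u _ hu => rw [lie_smul]; exact Submodule.smul_mem _ a hu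

/-- The lower central series of a Lie subalgebra embeds into that of the ambient algebra. -/
theorem lcs_subalg_le {𝕜 L : Type*} [Field 𝕜] [LieRing L] [LieAlgebra 𝕜 L]
    (K : LieSubalgebra 𝕜 L) :
    ∀ (n : ℕ) (x : K), x ∈ LieModule.lowerCentralSeries 𝕜 K K n →
      (x : L) ∈ LieModule.lowerCentralSeries 𝕜 L L n := by
  intro n
  induction n with
  | zero => intro x _; simp
  | succ n ih =>
    intro x hx
    rw [LieModule.lowerCentralSeries_succ, ← LieSubmodule.mem_toSubmodule,
      LieSubmodule.lieIdeal_oper_eq_linear_span'] at hx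
    induction hx using Submodule.span_induction with
    | mem z hz =>
      obtain ⟨a, -, c, hc, rfl⟩ := hz
      rw [LieSubalgebra.coe_bracket, LieModule.lowerCentralSeries_succ]
      exact LieSubmodule.lie_mem_lie (LieSubmodule.mem_top _) (ih c hc)
    | zero => simp
    | add u v _ _ hu hv => rw [AddSubmonoid.coe_add]; exact add_mem hu hv
    | smul a u _ hu =>
      have : ((a • u : K) : L) = a • (u : L) := rfl
      rw [this]
      exact Submodule.smul_mem _ a hu

/-- Induction principle for membership in `⨆ j ∈ s, V j`. -/
theorem biSup_induction {𝕜 L : Type*} [Field 𝕜] [AddCommGroup L] [Module 𝕜 L]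
    (V : ℕ → Submodule 𝕜 L) (s : Set ℕ) {C : L → Prop} {x : L}
    (hx : x ∈ ⨆ j ∈ s, V j)
    (hmem : ∀ j ∈ s, ∀ y ∈ V j, C y) (h0 : C 0)
    (hadd : ∀ y z, C y → C z → C (y + z)) (hsmul : ∀ (a : 𝕜) (y : L), C y → C (a • y)) : C x := by
  have hs : (⨆ j ∈ s, V j) = Submodule.span 𝕜 (⋃ j ∈ s, (V j : Set L)) := by
    rw [Submodule.span_iUnion₂]
    simp [Submodule.span_eq]
  rw [hs] at hx
  induction hx using Submodule.span_induction with
  | mem y hy =>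
    obtain ⟨j, hj, hyj⟩ := Set.mem_iUnion₂.mp hy
    exact hmem j hj y hyj
  | zero => exact h0
  | add u v _ _ hu hv => exact hadd u v hu hv
  | smul a u _ hu => exact hsmul a u hu


/-- Proposition `algraduada`, Lie algebra version:  in a nilpotent graded Lie
algebra `L = ⊕_{i≥1} L(i)`, if `P` is generated by a set `I` of nonzero homogeneous elements
and `x ↦ f x` is injective on `I` with `f x ∈ ⊕_{j≥i} L(j)` and `f x − x ∈ ⊕_{j≥i+1} L(j)`
whenever `x ∈ I ∩ L(i)`, and `R` is generated by `f '' I`, then `R` is nilpotent and the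
nilpotency degree of `P` is at most that of `R`. -/
theorem statement2 {F : Type*} [Field F] [CharZero F]
    {L : Type*} [LieRing L] [LieAlgebra F L]
    (V : ℕ → Submodule F L) (hinternal : DirectSum.IsInternal V) (hV0 : V 0 = ⊥)
    (hbracket : ∀ i j : ℕ, ∀ x ∈ V i, ∀ y ∈ V j, ⁅x, y⁆ ∈ V (i + j))
    (hnilp : LieRing.IsNilpotent L)
    (I : Set L) (hI : ∀ x ∈ I, x ≠ 0 ∧ ∃ i : ℕ, x ∈ V i)
    (f : L → L) (hinj : Set.InjOn f I)
    (hf : ∀ x ∈ I, ∀ i : ℕ, x ∈ V i →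
      f x ∈ (⨆ j ∈ Set.Ici i, V j) ∧ f x - x ∈ (⨆ j ∈ Set.Ici (i + 1), V j)) :
    LieRing.IsNilpotent ↥(LieSubalgebra.lieSpan F L (f '' I)) ∧
    nilDeg F ↥(LieSubalgebra.lieSpan F L I) ≤
      nilDeg F ↥(LieSubalgebra.lieSpan F L (f '' I)) := by
  classical
  set Ralg := LieSubalgebra.lieSpan F L (f '' I) with hRalg
  set Palg := LieSubalgebra.lieSpan F L I with hPalg
  set W : ℕ → Submodule F L := fun i => ⨆ j ∈ Set.Ici i, V j with hWdef
  -- basic facts about W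
  have hVW : ∀ i : ℕ, V i ≤ W i := fun i => le_biSup _ (Set.mem_Ici.mpr le_rfl)
  have hWmono : ∀ i j : ℕ, i ≤ j → W j ≤ W i := fun i j h =>
    biSup_mono (fun k hk => le_trans h hk)
  have hWbrk : ∀ i j : ℕ, ∀ x ∈ W i, ∀ y ∈ W j, ⁅x, y⁆ ∈ W (i + j) := by
    intro i j x hx
    refine biSup_induction (C := fun x => ∀ y ∈ W j, ⁅x, y⁆ ∈ W (i + j))
      V (Set.Ici i) hx ?_ ?_ ?_ ?_
    · intro t ht x' hx' y hy
      refine biSup_induction (C := fun y => ⁅x', y⁆ ∈ W (i + j)) V (Set.Ici j) hy ?_ ?_ ?_ ?_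
      · intro u hu y' hy'
        exact hWmono (i + j) (t + u) (add_le_add ht hu) (hVW (t + u) (hbracket t u x' hx' y' hy'))
      · show ⁅x', (0 : L)⁆ ∈ W (i + j); rw [lie_zero]; exact zero_mem _
      · intro y1 y2 h1 h2; show ⁅x', y1 + y2⁆ ∈ W (i + j)
        rw [lie_add]; exact add_mem h1 h2
      · intro a y1 h1; show ⁅x', a • y1⁆ ∈ W (i + j)
        rw [lie_smul]; exact Submodule.smul_mem _ a h1
    · intro y _; rw [zero_lie]; exact zero_mem _
    · intro x1 x2 h1 h2 y hy; rw [add_lie]; exact add_mem (h1 y hy) (h2 y hy)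
    · intro a x1 h1 y hy; rw [smul_lie]; exact Submodule.smul_mem _ a (h1 y hy)
  -- disjointness
  have hdis : ∀ (s : ℕ) (a : L), a ∈ V s → a ∈ W (s + 1) → a = 0 := by
    intro s a ha hb
    have hind := hinternal.submodule_iSupIndep
    have h1 : W (s + 1) ≤ ⨆ j ∈ {j : ℕ | j ≠ s}, V j :=
      biSup_mono (fun k hk => by
        simp only [Set.mem_Ici] at hk
        simp only [Set.mem_setOf_eq]
        omega)
    have h2 : Disjoint (V s) (⨆ j ≠ s, V j) := hind s
    exact (Submodule.mem_bot F).mp (h2.le_bot ⟨ha, h1 hb⟩)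
  -- degrees of elements of I
  have hdeg : ∀ x ∈ I, ∃ i : ℕ, 1 ≤ i ∧ x ∈ V i := by
    intro x hx
    obtain ⟨hne, i, hi⟩ := hI x hx
    refine ⟨i, ?_, hi⟩
    rcases Nat.eq_zero_or_pos i with rfl | h
    · rw [hV0, Submodule.mem_bot] at hi; exact absurd hi hne
    · exact h
  -- the key predicate
  set Good : ℕ → L → Prop := fun n a =>
    ∃ (s : ℕ) (β : Ralg), n + 1 ≤ s ∧ a ∈ V s ∧ (β : L) ∈ W s ∧ (β : L) - a ∈ W (s + 1) ∧
      β ∈ LieModule.lowerCentralSeries F Ralg Ralg n with hGood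
  set GS : ℕ → Submodule F L := fun n => Submodule.span F {a | Good n a} with hGS
  have hGmono : ∀ n n' : ℕ, n' ≤ n → ∀ a : L, Good n a → Good n' a := by
    rintro n n' hn a ⟨s, β, hs, ha, hbW, hd, hβ⟩
    exact ⟨s, β, by omega, ha, hbW, hd,
      LieModule.antitone_lowerCentralSeries F Ralg Ralg hn hβ⟩
  have hGSmono : ∀ n n' : ℕ, n' ≤ n → GS n ≤ GS n' := fun n n' h =>
    Submodule.span_mono (fun a ha => hGmono n n' h a ha)
  -- bracket lemma for Good generators
  have hGbrk : ∀ (i j : ℕ) (a1 a2 : L), Good i a1 → Good j a2 →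
      Good (i + j + 1) ⁅a1, a2⁆ := by
    rintro i j a1 a2 ⟨s1, β1, hs1, ha1, hb1, hd1, hβ1⟩ ⟨s2, β2, hs2, ha2, hb2, hd2, hβ2⟩
    refine ⟨s1 + s2, ⁅β1, β2⁆, by omega, hbracket s1 s2 a1 ha1 a2 ha2, ?_, ?_, ?_⟩
    · rw [LieSubalgebra.coe_bracket]
      exact hWbrk s1 s2 _ hb1 _ hb2
    · rw [LieSubalgebra.coe_bracket]
      have key : ⁅(β1 : L), (β2 : L)⁆ - ⁅a1, a2⁆ =
          ⁅(β1 : L) - a1, (β2 : L)⁆ + ⁅a1, (β2 : L) - a2⁆ := by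
        rw [sub_lie, lie_sub]; abel
      rw [key]
      apply add_mem
      · have := hWbrk (s1 + 1) s2 _ hd1 _ hb2
        rwa [show s1 + 1 + s2 = s1 + s2 + 1 by omega] at this
      · have := hWbrk s1 (s2 + 1) a1 (hVW s1 ha1) _ hd2
        rwa [show s1 + (s2 + 1) = s1 + s2 + 1 by omega] at this
    · exact lcs_lie_mem j i β1 β2 hβ1 hβ2
  have hGSbrk : ∀ (i j : ℕ) (a1 a2 : L), a1 ∈ GS i → a2 ∈ GS j →
      ⁅a1, a2⁆ ∈ GS (i + j + 1) := by
    intro i j a1 a2 h1 h2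
    induction h1 using Submodule.span_induction with
    | mem x hx =>
      induction h2 using Submodule.span_induction with
      | mem y hy => exact Submodule.subset_span (hGbrk i j x y hx hy)
      | zero => rw [lie_zero]; exact zero_mem _
      | add u v _ _ hu hv => rw [lie_add]; exact add_mem hu hv
      | smul a u _ hu => rw [lie_smul]; exact Submodule.smul_mem _ a hu
    | zero => rw [zero_lie]; exact zero_mem _
    | add u v _ _ hu hv => rw [add_lie]; exact add_mem hu hv
    | smul a u _ hu => rw [smul_lie]; exact Submodule.smul_mem _ a hu
  -- P is contained in GS 0
  have hPC : ∀ x ∈ Palg, x ∈ GS 0 := by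
    intro x hx
    rw [hPalg] at hx
    refine LieSubalgebra.lieSpan_induction (R := F) (L := L) (p := fun y _ => y ∈ GS 0)
      ?_ (zero_mem _) ?_ ?_ ?_ hx
    · intro y hy
      obtain ⟨i, hi1, hyi⟩ := hdeg y hy
      obtain ⟨hfW, hfd⟩ := hf y hy i hyi
      refine Submodule.subset_span ⟨i, ⟨f y, LieSubalgebra.subset_lieSpan
        (Set.mem_image_of_mem f hy)⟩, by omega, hyi, hfW, hfd, ?_⟩
      rw [LieModule.lowerCentralSeries_zero]; exact LieSubmodule.mem_top _
    · intro x' y' _ _ hx' hy'; exact add_mem hx' hy'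

    · intro r x' _ hx'; exact Submodule.smul_mem _ r hx'
    · intro x' y' _ _ hx' hy'
      exact hGSmono 1 0 (by omega) (hGSbrk 0 0 x' y' hx' hy')
  -- lower central series of P maps into GS
  have hD : ∀ (n : ℕ) (x : Palg), x ∈ LieModule.lowerCentralSeries F Palg Palg n →
      (x : L) ∈ GS n := by
    intro n
    induction n with
    | zero => intro x _; exact hPC _ x.2
    | succ n ih =>
      intro x hx
      rw [LieModule.lowerCentralSeries_succ, ← LieSubmodule.mem_toSubmodule,
        LieSubmodule.lieIdeal_oper_eq_linear_span'] at hx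
      induction hx using Submodule.span_induction with
      | mem z hz =>
        obtain ⟨a, -, c, hc, rfl⟩ := hz
        rw [LieSubalgebra.coe_bracket]
        have := hGSbrk 0 n _ _ (hPC _ a.2) (ih c hc)
        rwa [show 0 + n + 1 = n + 1 by omega] at this
      | zero => simp
      | add u v _ _ hu hv => rw [AddSubmonoid.coe_add]; exact add_mem hu hv
      | smul a u _ hu =>
        have h : ((a • u : Palg) : L) = a • (u : L) := rfl
        rw [h]; exact Submodule.smul_mem _ a hu
  -- R is nilpotent
  obtain ⟨k, hk⟩ := (LieModule.isNilpotent_iff F L L).mp hnilp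
  have hRk : LieModule.lowerCentralSeries F Ralg Ralg k = ⊥ := by
    rw [LieSubmodule.eq_bot_iff]
    intro m hm
    have := lcs_subalg_le Ralg k m hm
    rw [hk, LieSubmodule.mem_bot] at this
    exact Subtype.ext this
  have hRnilp : LieRing.IsNilpotent ↥Ralg := (LieModule.isNilpotent_iff F Ralg Ralg).mpr ⟨k, hRk⟩
  refine ⟨hRnilp, ?_⟩
  -- the nilpotency degree inequality
  set m := nilDeg F ↥Ralg with hm
  have hmR : LieModule.lowerCentralSeries F Ralg Ralg m = ⊥ :=
    Nat.sInf_mem (⟨k, hRk⟩ : Set.Nonempty {n | LieModule.lowerCentralSeries F Ralg Ralg n = ⊥})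
  have hGzero : ∀ a : L, Good m a → a = 0 := by
    rintro a ⟨s, β, hs, ha, hbW, hd, hβ⟩
    rw [hmR, LieSubmodule.mem_bot] at hβ
    rw [hβ] at hd
    rw [ZeroMemClass.coe_zero, zero_sub] at hd
    have : a ∈ W (s + 1) := by
      have := neg_mem hd
      rwa [neg_neg] at this
    exact hdis s a ha this
  have hGSbot : GS m = ⊥ := by
    rw [eq_bot_iff]
    refine Submodule.span_le.mpr ?_
    intro a ha
    rw [SetLike.mem_coe, Submodule.mem_bot]
    exact hGzero a ha
  have hPm : LieModule.lowerCentralSeries F Palg Palg m = ⊥ := by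
    rw [LieSubmodule.eq_bot_iff]
    intro x hx
    have := hD m x hx
    rw [hGSbot, Submodule.mem_bot] at this
    exact Subtype.ext this
  exact Nat.sInf_le hPm


end Paper
end
end

section
/- For all α, λ ∈ F and every admissible sequence S: (a) h(α,λ,S) is a solvable Lie algebra, and it is nilpotent if λ = 0; (b) n(S) is a Lie ideal of h(α,λ,S); (c) h(α,λ,S) is the direct sum, as a vector space, of the line F·D(α,λ) and n(S). -/
open scoped Classical

noncomputable section

namespace Paper

attribute [local instance 100] LieRing.ofAssociativeRing

variable {F : Type*}

-- auxiliary lemmas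

lemma off_add_le {k : ℕ} (dv : Fin k → ℕ) {i j : Fin k} (h : i < j) :
    off dv i + dv i ≤ off dv j := by
  have hsub : insert i (Finset.Iio i) ⊆ Finset.Iio j := by
    intro t ht
    rcases Finset.mem_insert.mp ht with rfl | ht'
    · exact Finset.mem_Iio.mpr h
    · exact Finset.mem_Iio.mpr ((Finset.mem_Iio.mp ht').trans h)
  calc off dv i + dv i = ∑ t ∈ insert i (Finset.Iio i), dv t := by
        rw [Finset.sum_insert (by simp), add_comm]; rfl
    _ ≤ _ := Finset.sum_le_sum_of_subset hsub

lemma emb_val {k : ℕ} (dv : Fin k → ℕ) (i : Fin k) (r : Fin (dv i)) :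
    (emb dv i r : ℕ) = off dv i + r := rfl

lemma emb_block_eq {k : ℕ} {dv : Fin k → ℕ} {i j : Fin k} {r : Fin (dv i)}
    {s : Fin (dv j)} (h : emb dv i r = emb dv j s) : i = j := by
  rcases lt_trichotomy i j with hij | hij | hij
  · have h1 := off_add_le dv hij
    have h2 := r.isLt
    have h3 := congrArg Fin.val h
    simp only [emb_val] at h3
    omega
  · exact hij
  · have h1 := off_add_le dv hij
    have h2 := s.isLt
    have h3 := congrArg Fin.val h
    simp only [emb_val] at h3
    omega

lemma emb_inj_val {k : ℕ} {dv : Fin k → ℕ} {i j : Fin k} {r : Fin (dv i)}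
    {s : Fin (dv j)} (h : emb dv i r = emb dv j s) : i = j ∧ (r : ℕ) = (s : ℕ) := by
  obtain rfl := emb_block_eq h
  have h3 := congrArg Fin.val h
  simp only [emb_val] at h3
  exact ⟨rfl, by omega⟩

lemma emb_right_inj {k : ℕ} {dv : Fin k → ℕ} {i : Fin k} {r s : Fin (dv i)}
    (h : emb dv i r = emb dv i s) : r = s :=
  Fin.ext (emb_inj_val h).2

lemma off_succ {k : ℕ} (dv : Fin k → ℕ) (i : Fin k) (h : (i : ℕ) + 1 < k) :
    off dv ⟨(i : ℕ) + 1, h⟩ = off dv i + dv i := by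
  have : Finset.Iio (⟨(i : ℕ) + 1, h⟩ : Fin k) = insert i (Finset.Iio i) := by
    ext t
    simp only [Finset.mem_Iio, Finset.mem_insert, Fin.lt_def, Fin.ext_iff]
    omega
  rw [off, this, Finset.sum_insert (by simp), add_comm]
  rfl

lemma off_zero {k : ℕ} (dv : Fin k → ℕ) (hk : 0 < k) : off dv ⟨0, hk⟩ = 0 := by
  have : Finset.Iio (⟨0, hk⟩ : Fin k) = ∅ := by
    ext t
    simp [Fin.lt_def]
  rw [off, this, Finset.sum_empty]

lemma cover {k : ℕ} {dv : Fin k → ℕ} (hk : 0 < k)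
    (x : Fin (dtot dv)) : ∃ i r, x = emb dv i r := by
  classical
  set s : Finset (Fin k) := Finset.univ.filter (fun i => off dv i ≤ (x : ℕ)) with hs
  have hne : s.Nonempty := by
    refine ⟨⟨0, hk⟩, ?_⟩
    refine Finset.mem_filter.mpr ?_
    exact ⟨Finset.mem_univ _, by rw [off_zero]; omega⟩
  set i : Fin k := s.max' hne with hi
  have hile : off dv i ≤ (x : ℕ) := by
    have := s.max'_mem hne
    simp only [hs, Finset.mem_filter] at this
    exact this.2
  have hxlt : (x : ℕ) < off dv i + dv i := by
    by_contra hcon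
    push_neg at hcon
    by_cases hsucc : (i : ℕ) + 1 < k
    · have hmem : (⟨(i : ℕ) + 1, hsucc⟩ : Fin k) ∈ s := by
        refine Finset.mem_filter.mpr ?_
        exact ⟨Finset.mem_univ _, by rw [off_succ dv i hsucc]; omega⟩
      have := s.le_max' _ hmem
      rw [← hi] at this
      have : ((⟨(i : ℕ) + 1, hsucc⟩ : Fin k) : ℕ) ≤ (i : ℕ) := this
      simp at this
    · -- i is the last index
      have hbig : dtot dv ≤ off dv i + dv i := by
        have hsub : (Finset.univ : Finset (Fin k)) ⊆ insert i (Finset.Iio i) := by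
          intro t _
          rcases lt_or_ge t i with h | h
          · exact Finset.mem_insert.mpr (Or.inr (Finset.mem_Iio.mpr h))
          · have : t = i := by
              apply Fin.ext
              have h1 := t.isLt
              have h2 : (i : ℕ) ≤ (t : ℕ) := h
              omega
            exact Finset.mem_insert.mpr (Or.inl this)
        calc dtot dv ≤ ∑ t ∈ insert i (Finset.Iio i), dv t :=
              Finset.sum_le_sum_of_subset hsub
          _ = off dv i + dv i := by rw [Finset.sum_insert (by simp), add_comm]; rfl
      have := x.isLt
      omega
  refine ⟨i, ⟨(x : ℕ) - off dv i, by omega⟩, ?_⟩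
  apply Fin.ext
  rw [emb_val]
  simp
  omega


section Decomp

variable {k : ℕ} {dv : Fin k → ℕ}

noncomputable def bI (hk : 0 < k) (x : Fin (dtot dv)) : Fin k :=
  (cover hk x).choose

noncomputable def bR (hk : 0 < k) (x : Fin (dtot dv)) :
    Fin (dv (bI hk x)) :=
  (cover hk x).choose_spec.choose

lemma emb_bI (hk : 0 < k) (x : Fin (dtot dv)) :
    emb dv (bI hk x) (bR hk x) = x :=
  ((cover hk x).choose_spec.choose_spec).symm

lemma bI_emb (hk : 0 < k) (i : Fin k) (r : Fin (dv i)) :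
    bI hk (emb dv i r) = i :=
  emb_block_eq (emb_bI hk (emb dv i r))

lemma sum_emb {M : Type*} [AddCommMonoid M] (hk : 0 < k)
    (f : Fin (dtot dv) → M) :
    ∑ x, f x = ∑ i, ∑ r, f (emb dv i r) := by
  have hbij : Function.Bijective (fun p : Σ i, Fin (dv i) => emb dv p.1 p.2) := by
    constructor
    · rintro ⟨i, r⟩ ⟨j, s⟩ h
      obtain ⟨rfl, h2⟩ := emb_inj_val h
      exact Sigma.ext rfl (heq_of_eq (Fin.ext h2))
    · intro x
      obtain ⟨i, r, rfl⟩ := cover hk x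
      exact ⟨⟨i, r⟩, rfl⟩
  rw [← Fintype.sum_bijective _ hbij _ f (fun p => rfl)]
  exact Finset.sum_sigma _ _ _

end Decomp


section Wsub

variable (F : Type*) [Field F] {ι : Type*} [Fintype ι] [DecidableEq ι]

/-- Matrices supported where the weight increases by at least `m`. -/
def Wsub (w : ι → ℕ) (m : ℕ) : Submodule F (Matrix ι ι F) where
  carrier := {X | ∀ x y, w y < w x + m → X x y = 0}
  add_mem' := by
    intro X Y hX hY x y h
    simp [Matrix.add_apply, hX x y h, hY x y h]
  zero_mem' := by intro x y h; simp
  smul_mem' := by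
    intro c X hX x y h
    simp [Matrix.smul_apply, hX x y h]

variable {F}

lemma mem_wsub {w : ι → ℕ} {m : ℕ} {X : Matrix ι ι F} :
    X ∈ Wsub F w m ↔ ∀ x y, w y < w x + m → X x y = 0 := Iff.rfl

lemma wsub_anti {w : ι → ℕ} {m m' : ℕ} (h : m' ≤ m) : Wsub F w m ≤ Wsub F w m' :=
  fun _X hX x y hxy => hX x y (by omega)

lemma wsub_mul {w : ι → ℕ} {m m' : ℕ} {X Y : Matrix ι ι F}
    (hX : X ∈ Wsub F w m) (hY : Y ∈ Wsub F w m') : X * Y ∈ Wsub F w (m + m') := by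
  intro x y h
  rw [Matrix.mul_apply]
  apply Finset.sum_eq_zero
  intro z _
  by_cases hz : w z < w x + m
  · rw [hX x z hz, zero_mul]
  · rw [hY z y (by omega), mul_zero]

lemma wsub_lie {w : ι → ℕ} {m m' : ℕ} {X Y : Matrix ι ι F}
    (hX : X ∈ Wsub F w m) (hY : Y ∈ Wsub F w m') : ⁅X, Y⁆ ∈ Wsub F w (m + m') := by
  rw [Ring.lie_def]
  exact sub_mem (wsub_mul hX hY) (by rw [add_comm]; exact wsub_mul hY hX)

lemma wsub_pow {w : ι → ℕ} {X : Matrix ι ι F} (hX : X ∈ Wsub F w 1) (m : ℕ) :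
    X ^ m ∈ Wsub F w m := by
  induction m with
  | zero =>
    intro x y h
    rw [pow_zero, Matrix.one_apply]
    have : x ≠ y := by rintro rfl; omega
    simp [Matrix.one_apply, this]
  | succ n ih =>
    rw [pow_succ]
    exact wsub_mul ih hX

lemma wsub_eq_zero {w : ι → ℕ} {m : ℕ} {X : Matrix ι ι F}
    (h : ∀ x y : ι, w y < w x + m) (hX : X ∈ Wsub F w m) : X = 0 := by
  ext x y
  rw [hX x y (h x y)]
  simp

lemma wsub_lie_diag {w : ι → ℕ} (hw : Function.Injective w) {X Y : Matrix ι ι F}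
    (hX : X ∈ Wsub F w 0) (hY : Y ∈ Wsub F w 0) : ⁅X, Y⁆ ∈ Wsub F w 1 := by
  intro x y h
  rcases Nat.lt_or_ge (w y) (w x) with hlt | hge
  · have h1 := wsub_mul hX hY x y (by omega)
    have h2 := wsub_mul hY hX x y (by omega)
    rw [Ring.lie_def, Matrix.sub_apply, h1, h2, sub_zero]
  · have hyx : y = x := hw (by omega)
    subst hyx
    rw [Ring.lie_def, Matrix.sub_apply, Matrix.mul_apply, Matrix.mul_apply]
    have key : ∀ Z W : Matrix ι ι F, Z ∈ Wsub F w 0 → W ∈ Wsub F w 0 →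
        ∑ z, Z y z * W z y = Z y y * W y y := by
      intro Z W hZ hW
      apply Finset.sum_eq_single
      · intro z _ hz
        rcases Nat.lt_or_ge (w z) (w y) with h1 | h1
        · rw [hZ y z (by omega), zero_mul]
        · have : w y < w z := by
            rcases Nat.lt_or_ge (w y) (w z) with h2 | h2
            · exact h2
            · exact absurd (hw (by omega)) hz
          rw [hW z y (by omega), mul_zero]
      · intro hy; exact absurd (Finset.mem_univ y) hy
    rw [key X Y hX hY, key Y X hY hX, mul_comm]
    simp

end Wsub

section Blocks

variable [Field F] {k : ℕ} {dv : Fin k → ℕ}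

lemma embMat_apply_same {i j : Fin k} (M : Matrix (Fin (dv i)) (Fin (dv j)) F)
    (r : Fin (dv i)) (s : Fin (dv j)) :
    embMat dv i j M (emb dv i r) (emb dv j s) = M r s := by
  unfold embMat
  simp only [Matrix.of_apply]
  rw [Finset.sum_eq_single r]
  · rw [Finset.sum_eq_single s]
    · simp
    · intro s' _ hs'
      rw [if_neg]
      rintro ⟨-, h2⟩
      exact hs' (emb_right_inj h2.symm)
    · intro h; exact absurd (Finset.mem_univ s) h
  · intro r' _ hr'
    apply Finset.sum_eq_zero
    intro s' _
    rw [if_neg]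
    rintro ⟨h1, -⟩
    exact hr' (emb_right_inj h1.symm)
  · intro h; exact absurd (Finset.mem_univ r) h

lemma embMat_apply_ne {i j a b : Fin k} (M : Matrix (Fin (dv i)) (Fin (dv j)) F)
    (r : Fin (dv a)) (s : Fin (dv b)) (h : a ≠ i ∨ b ≠ j) :
    embMat dv i j M (emb dv a r) (emb dv b s) = 0 := by
  unfold embMat
  simp only [Matrix.of_apply]
  apply Finset.sum_eq_zero
  intro r' _
  apply Finset.sum_eq_zero
  intro s' _
  rw [if_neg]
  rintro ⟨h1, h2⟩
  rcases h with h | h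
  · exact h (emb_block_eq h1)
  · exact h (emb_block_eq h2)

lemma Dmat_apply_same (α lam : F) {i : Fin k} (r s : Fin (dv i)) :
    Dmat dv α lam (emb dv i r) (emb dv i s) = Jord (dv i) (α - (i : ℕ) * lam) r s := by
  unfold Dmat
  rw [Matrix.sum_apply]
  rw [Finset.sum_eq_single i]
  · exact embMat_apply_same _ r s
  · intro i' _ hi'
    exact embMat_apply_ne _ r s (Or.inl (Ne.symm hi'))
  · intro h; exact absurd (Finset.mem_univ i) h


lemma Dmat_apply_ne (α lam : F) {i j : Fin k} (r : Fin (dv i)) (s : Fin (dv j))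
    (h : i ≠ j) :
    Dmat dv α lam (emb dv i r) (emb dv j s) = 0 := by
  unfold Dmat
  rw [Matrix.sum_apply]
  apply Finset.sum_eq_zero
  intro i' _
  by_cases hi : i = i'
  · exact embMat_apply_ne _ r s (Or.inr (fun e => h (hi.trans e.symm)))
  · exact embMat_apply_ne _ r s (Or.inl hi)

/-- block-index weight -/
noncomputable def bw (hk : 0 < k) (x : Fin (dtot dv)) : ℕ := (bI hk x : ℕ)

lemma bw_emb (hk : 0 < k) (i : Fin k) (r : Fin (dv i)) : bw hk (emb dv i r) = (i : ℕ) := by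
  rw [bw, bI_emb]

lemma Dmat_mem_bw0 (hk : 0 < k) (α lam : F) : Dmat dv α lam ∈ Wsub F (bw hk) 0 := by
  intro x y h
  obtain ⟨i, r, rfl⟩ := cover hk x
  obtain ⟨j, s, rfl⟩ := cover hk y
  rw [bw_emb, bw_emb] at h
  exact Dmat_apply_ne α lam r s (by rintro rfl; omega)

lemma Dmat_mem_val0 (hk : 0 < k) (α lam : F) :
    Dmat dv α lam ∈ Wsub F (fun x : Fin (dtot dv) => (x : ℕ)) 0 := by
  intro x y h
  have h' : (y : ℕ) < (x : ℕ) + 0 := h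
  obtain ⟨i, r, rfl⟩ := cover hk x
  obtain ⟨j, s, rfl⟩ := cover hk y
  by_cases hij : i = j
  · subst hij
    rw [Dmat_apply_same]
    have hv : (s : ℕ) < (r : ℕ) := by
      simp only [emb_val] at h'
      omega
    unfold Jord
    simp only [Matrix.of_apply]
    rw [if_neg (by omega), if_neg (by omega)]
  · exact Dmat_apply_ne α lam r s hij

lemma Dmat00_mem_val1 (hk : 0 < k) :
    Dmat dv (0 : F) 0 ∈ Wsub F (fun x : Fin (dtot dv) => (x : ℕ)) 1 := by
  intro x y h
  have h' : (y : ℕ) < (x : ℕ) + 1 := h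
  obtain ⟨i, r, rfl⟩ := cover hk x
  obtain ⟨j, s, rfl⟩ := cover hk y
  by_cases hij : i = j
  · subst hij
    rw [Dmat_apply_same]
    have hv : (s : ℕ) ≤ (r : ℕ) := by
      simp only [emb_val] at h'
      omega
    unfold Jord
    simp only [Matrix.of_apply]
    by_cases h1 : (s : ℕ) = (r : ℕ)
    · rw [if_pos h1]
      push_cast
      ring
    · rw [if_neg h1, if_neg (by omega)]
  · exact Dmat_apply_ne 0 0 r s hij

lemma bw1_le_val1 (hk : 0 < k) :
    Wsub F (bw (dv := dv) hk) 1 ≤ Wsub F (fun x : Fin (dtot dv) => (x : ℕ)) 1 := by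
  intro X hX x y h
  have h' : (y : ℕ) < (x : ℕ) + 1 := h
  apply hX
  by_contra hcon
  push_neg at hcon
  have hx := emb_bI (dv := dv) hk x
  have hy := emb_bI (dv := dv) hk y
  unfold bw at hcon
  have h1 : bI hk x < bI (dv := dv) hk y := by
    rw [Fin.lt_def]
    omega
  have h2 := off_add_le dv h1
  have h3 : off dv (bI hk x) + (bR hk x : ℕ) = (x : ℕ) := congrArg Fin.val hx
  have h4 : off dv (bI hk y) + (bR hk y : ℕ) = (y : ℕ) := congrArg Fin.val hy
  have h5 := (bR (dv := dv) hk x).isLt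
  omega


/-- support only on superdiagonal blocks -/
def Pprop (X : Matrix (Fin (dtot dv)) (Fin (dtot dv)) F) : Prop :=
  ∀ (i j : Fin k) (r : Fin (dv i)) (s : Fin (dv j)), (j : ℕ) ≠ (i : ℕ) + 1 →
    X (emb dv i r) (emb dv j s) = 0

/-- support only on diagonal blocks -/
def DiagP (X : Matrix (Fin (dtot dv)) (Fin (dtot dv)) F) : Prop :=
  ∀ (i j : Fin k) (r : Fin (dv i)) (s : Fin (dv j)), i ≠ j →
    X (emb dv i r) (emb dv j s) = 0

lemma diagP_Dmat (α lam : F) : DiagP (dv := dv) (Dmat dv α lam) :=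
  fun _i _j r s h => Dmat_apply_ne α lam r s h

lemma mul_apply_emb (hk : 0 < k) (X Y : Matrix (Fin (dtot dv)) (Fin (dtot dv)) F)
    {i j : Fin k} (r : Fin (dv i)) (s : Fin (dv j)) :
    (X * Y) (emb dv i r) (emb dv j s) =
      ∑ t, ∑ u, X (emb dv i r) (emb dv t u) * Y (emb dv t u) (emb dv j s) := by
  rw [Matrix.mul_apply, sum_emb hk]

lemma Pprop_lie_diag (hk : 0 < k) {D X : Matrix (Fin (dtot dv)) (Fin (dtot dv)) F}
    (hD : DiagP (dv := dv) D) (hX : Pprop (dv := dv) X) : Pprop (dv := dv) ⁅D, X⁆ := by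
  intro i j r s hij
  rw [Ring.lie_def, Matrix.sub_apply, mul_apply_emb hk, mul_apply_emb hk]
  have h1 : ∑ t, ∑ u, D (emb dv i r) (emb dv t u) * X (emb dv t u) (emb dv j s) = 0 := by
    apply Finset.sum_eq_zero; intro t _
    apply Finset.sum_eq_zero; intro u _
    by_cases ht : i = t
    · subst ht
      rw [hX i j u s hij, mul_zero]
    · rw [hD i t r u ht, zero_mul]
  have h2 : ∑ t, ∑ u, X (emb dv i r) (emb dv t u) * D (emb dv t u) (emb dv j s) = 0 := by
    apply Finset.sum_eq_zero; intro t _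
    apply Finset.sum_eq_zero; intro u _
    by_cases ht : t = j
    · subst ht
      rw [hX i t r u hij, zero_mul]
    · rw [hD t j u s ht, mul_zero]
  rw [h1, h2, sub_zero]

lemma Cm_apply (α lam : F) {i j : Fin k} (r : Fin (dv i)) (s : Fin (dv j)) :
    (Dmat dv α lam - Dmat dv (0 : F) 0) (emb dv i r) (emb dv j s) =
      if h : i = j then (if (s : ℕ) = (r : ℕ) then α - (i : ℕ) * lam else 0) else 0 := by
  rw [Matrix.sub_apply]
  by_cases h : i = j
  · subst h
    rw [Dmat_apply_same, Dmat_apply_same, dif_pos rfl]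
    unfold Jord
    simp only [Matrix.of_apply]
    split_ifs <;> push_cast <;> ring
  · rw [Dmat_apply_ne _ _ _ _ h, Dmat_apply_ne _ _ _ _ h, sub_self, dif_neg h]

lemma lie_C (hk : 0 < k) (α lam : F) {X : Matrix (Fin (dtot dv)) (Fin (dtot dv)) F}
    (hX : Pprop (dv := dv) X) :
    ⁅Dmat dv α lam - Dmat dv (0 : F) 0, X⁆ = lam • X := by
  set Cm := Dmat dv α lam - Dmat dv (0 : F) 0 with hCm
  ext x y
  obtain ⟨i, r, rfl⟩ := cover hk x
  obtain ⟨j, s, rfl⟩ := cover hk y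
  rw [Ring.lie_def, Matrix.sub_apply, mul_apply_emb hk, mul_apply_emb hk]
  have h1 : ∑ t, ∑ u, Cm (emb dv i r) (emb dv t u) * X (emb dv t u) (emb dv j s) =
      (α - (i : ℕ) * lam) * X (emb dv i r) (emb dv j s) := by
    rw [Finset.sum_eq_single i]
    · rw [Finset.sum_eq_single r]
      · rw [hCm, Cm_apply, dif_pos rfl, if_pos rfl]
      · intro u _ hu
        rw [hCm, Cm_apply, dif_pos rfl, if_neg (fun e => hu (Fin.ext e)), zero_mul]
      · intro h; exact absurd (Finset.mem_univ r) h
    · intro t _ ht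
      apply Finset.sum_eq_zero; intro u _
      rw [hCm, Cm_apply, dif_neg (fun e => ht e.symm), zero_mul]
    · intro h; exact absurd (Finset.mem_univ i) h
  have h2 : ∑ t, ∑ u, X (emb dv i r) (emb dv t u) * Cm (emb dv t u) (emb dv j s) =
      X (emb dv i r) (emb dv j s) * (α - (j : ℕ) * lam) := by
    rw [Finset.sum_eq_single j]
    · rw [Finset.sum_eq_single s]
      · rw [hCm, Cm_apply, dif_pos rfl, if_pos rfl]
      · intro u _ hu
        rw [hCm, Cm_apply, dif_pos rfl, if_neg (fun e => hu (Fin.ext e).symm), mul_zero]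
      · intro h; exact absurd (Finset.mem_univ s) h
    · intro t _ ht
      apply Finset.sum_eq_zero; intro u _
      rw [hCm, Cm_apply, dif_neg ht, mul_zero]
    · intro h; exact absurd (Finset.mem_univ j) h
  rw [h1, h2, Matrix.smul_apply]
  by_cases hij : (j : ℕ) = (i : ℕ) + 1
  · have hc : ((j : ℕ) : F) = ((i : ℕ) : F) + 1 := by rw [hij]; push_cast; ring
    rw [smul_eq_mul, hc]
    ring
  · rw [hX i j r s hij]
    simp


lemma A_apply_ne {A : Matrix (Fin (dtot dv)) (Fin (dtot dv)) F} (hA : IsEShaped dv A)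
    {i j : Fin k} (r : Fin (dv i)) (s : Fin (dv j)) (h : (j : ℕ) ≠ (i : ℕ) + 1) :
    A (emb dv i r) (emb dv j s) = 0 := by
  have h0 := hA.1 i j h
  have h1 := congrFun (congrFun h0 r) s
  simpa [blk] using h1

lemma Pprop_A {A : Matrix (Fin (dtot dv)) (Fin (dtot dv)) F} (hA : IsEShaped dv A) :
    Pprop (dv := dv) A :=
  fun _i _j r s h => A_apply_ne hA r s h

lemma A_mem_bw1 (hk : 0 < k) {A : Matrix (Fin (dtot dv)) (Fin (dtot dv)) F}
    (hA : IsEShaped dv A) : A ∈ Wsub F (bw (dv := dv) hk) 1 := by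
  intro x y h
  obtain ⟨i, r, rfl⟩ := cover hk x
  obtain ⟨j, s, rfl⟩ := cover hk y
  rw [bw_emb, bw_emb] at h
  exact A_apply_ne hA r s (by omega)

section Main

variable (α lam : F) (A : Matrix (Fin (dtot dv)) (Fin (dtot dv)) F)

/-- the generators of `n(S)` -/
def vseq (l : ℕ) : Matrix (Fin (dtot dv)) (Fin (dtot dv)) F :=
  (fun Y => ⁅Dmat dv (0 : F) 0, Y⁆)^[l] A

lemma vseq_zero : vseq A 0 = A := rfl

lemma vseq_succ (l : ℕ) : vseq A (l + 1) = ⁅Dmat dv (0 : F) 0, vseq A l⁆ :=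
  Function.iterate_succ_apply' _ l A

lemma Pprop_vseq (hk : 0 < k) (hA : IsEShaped dv A) (l : ℕ) : Pprop (dv := dv) (vseq A l) := by
  induction l with
  | zero => exact Pprop_A hA
  | succ n ih =>
    rw [vseq_succ]
    exact Pprop_lie_diag hk (diagP_Dmat 0 0) ih

lemma vseq_mem_bw1 (hk : 0 < k) (hA : IsEShaped dv A) (l : ℕ) :
    vseq A l ∈ Wsub F (bw (dv := dv) hk) 1 := by
  induction l with
  | zero => exact A_mem_bw1 hk hA
  | succ n ih =>
    rw [vseq_succ]
    exact wsub_lie (Dmat_mem_bw0 hk 0 0) ih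

lemma vseq_eq (hk : 0 < k) (hA : IsEShaped dv A) (l : ℕ) :
    vseq A (l + 1) = ⁅Dmat dv α lam, vseq A l⁆ + (-lam) • vseq A l := by
  have h1 : ⁅Dmat dv α lam - Dmat dv (0 : F) 0, vseq A l⁆ = lam • vseq A l :=
    lie_C hk α lam (Pprop_vseq A hk hA l)
  rw [sub_lie] at h1
  rw [vseq_succ, neg_smul, ← sub_eq_add_neg, ← h1]
  abel

lemma vseq_mem_h (hk : 0 < k) (hA : IsEShaped dv A) (l : ℕ) :
    vseq A l ∈ hAlg F dv α lam A := by
  induction l with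
  | zero => exact LieSubalgebra.subset_lieSpan (Set.mem_insert_iff.mpr (Or.inr rfl))
  | succ n ih =>
    rw [vseq_eq α lam A hk hA n]
    refine (hAlg F dv α lam A).add_mem ?_ ?_
    · exact (hAlg F dv α lam A).lie_mem
        (LieSubalgebra.subset_lieSpan (Set.mem_insert_iff.mpr (Or.inl rfl))) ih
    · exact (hAlg F dv α lam A).smul_mem _ ih


lemma nAlg_le_h (hk : 0 < k) (hA : IsEShaped dv A) :
    nAlg F dv A ≤ hAlg F dv α lam A := by
  apply LieSubalgebra.lieSpan_le.mpr
  rintro X ⟨l, rfl⟩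
  exact vseq_mem_h α lam A hk hA l

/-- strictly block upper triangular matrices, as a Lie subalgebra -/
def NT1 (hk : 0 < k) : LieSubalgebra F (Matrix (Fin (dtot dv)) (Fin (dtot dv)) F) :=
  { Wsub F (bw (dv := dv) hk) 1 with
    lie_mem' := fun {x y} hx hy => wsub_anti (by omega) (wsub_lie hx hy) }

lemma nAlg_mem_bw1 (hk : 0 < k) (hA : IsEShaped dv A) {X}
    (hX : X ∈ nAlg F dv A) : X ∈ Wsub F (bw (dv := dv) hk) 1 := by
  have hle : nAlg F dv A ≤ NT1 (dv := dv) hk := by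
    apply LieSubalgebra.lieSpan_le.mpr
    rintro X ⟨l, rfl⟩
    exact vseq_mem_bw1 A hk hA l
  exact hle hX

lemma lie_D_mem_nAlg (hk : 0 < k) (hA : IsEShaped dv A) :
    ∀ X ∈ nAlg F dv A, ⁅Dmat dv α lam, X⁆ ∈ nAlg F dv A := by
  set n := nAlg F dv A with hn
  let K : LieSubalgebra F (Matrix (Fin (dtot dv)) (Fin (dtot dv)) F) :=
    { carrier := {X | X ∈ n ∧ ⁅Dmat dv (0 : F) 0, X⁆ ∈ n ∧
        ⁅Dmat dv α lam - Dmat dv (0 : F) 0, X⁆ ∈ n}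
      add_mem' := by
        rintro a b ⟨ha1, ha2, ha3⟩ ⟨hb1, hb2, hb3⟩
        exact ⟨n.add_mem ha1 hb1, by rw [lie_add]; exact n.add_mem ha2 hb2,
          by rw [lie_add]; exact n.add_mem ha3 hb3⟩
      zero_mem' := by
        refine ⟨n.zero_mem, ?_, ?_⟩ <;> rw [lie_zero] <;> exact n.zero_mem
      smul_mem' := by
        rintro c a ⟨ha1, ha2, ha3⟩
        exact ⟨n.smul_mem c ha1, by rw [lie_smul]; exact n.smul_mem c ha2,
          by rw [lie_smul]; exact n.smul_mem c ha3⟩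
      lie_mem' := by
        rintro a b ⟨ha1, ha2, ha3⟩ ⟨hb1, hb2, hb3⟩
        refine ⟨n.lie_mem ha1 hb1, ?_, ?_⟩
        · rw [leibniz_lie]
          exact n.add_mem (n.lie_mem ha2 hb1) (n.lie_mem ha1 hb2)
        · rw [leibniz_lie]
          exact n.add_mem (n.lie_mem ha3 hb1) (n.lie_mem ha1 hb3) }
  have hle : n ≤ K := by
    rw [hn]
    apply LieSubalgebra.lieSpan_le.mpr
    rintro X ⟨l, rfl⟩
    refine ⟨LieSubalgebra.subset_lieSpan ⟨l, rfl⟩, ?_, ?_⟩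
    · rw [show ((fun Y => ⁅Dmat dv (0 : F) 0, Y⁆)^[l] A) = vseq A l from rfl, ← vseq_succ]
      exact LieSubalgebra.subset_lieSpan ⟨l + 1, rfl⟩
    · rw [show ((fun Y => ⁅Dmat dv (0 : F) 0, Y⁆)^[l] A) = vseq A l from rfl,
        lie_C hk α lam (Pprop_vseq A hk hA l)]
      exact n.smul_mem _ (LieSubalgebra.subset_lieSpan ⟨l, rfl⟩)
  intro X hX
  have h := hle hX
  have hD : Dmat dv α lam = Dmat dv (0 : F) 0 + (Dmat dv α lam - Dmat dv (0 : F) 0) := by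
    abel
  rw [hD, add_lie]
  exact n.add_mem h.2.1 h.2.2

lemma mem_sup_decomp {x : Matrix (Fin (dtot dv)) (Fin (dtot dv)) F} :
    x ∈ Submodule.span F {Dmat dv α lam} ⊔ (nAlg F dv A).toSubmodule ↔
      ∃ c : F, ∃ Z ∈ nAlg F dv A, x = c • Dmat dv α lam + Z := by
  rw [Submodule.mem_sup]
  constructor
  · rintro ⟨y, hy, z, hz, rfl⟩
    obtain ⟨c, rfl⟩ := Submodule.mem_span_singleton.mp hy
    exact ⟨c, z, hz, rfl⟩
  · rintro ⟨c, Z, hZ, rfl⟩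
    exact ⟨c • Dmat dv α lam, Submodule.mem_span_singleton.mpr ⟨c, rfl⟩, Z, hZ, rfl⟩

lemma lie_decomp_mem_n (hk : 0 < k) (hA : IsEShaped dv A) (c₁ c₂ : F)
    {Z₁ Z₂ : Matrix (Fin (dtot dv)) (Fin (dtot dv)) F}
    (hZ₁ : Z₁ ∈ nAlg F dv A) (hZ₂ : Z₂ ∈ nAlg F dv A) :
    ⁅c₁ • Dmat dv α lam + Z₁, c₂ • Dmat dv α lam + Z₂⁆ ∈ nAlg F dv A := by
  set n := nAlg F dv A
  set D := Dmat dv α lam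
  rw [add_lie]
  refine n.add_mem ?_ ?_
  · rw [smul_lie, lie_add, show ⁅D, c₂ • D⁆ = c₂ • ⁅D, D⁆ from lie_smul c₂ D D,
      lie_self, smul_zero, zero_add]
    exact n.smul_mem _ (lie_D_mem_nAlg α lam A hk hA Z₂ hZ₂)
  · rw [lie_add, show ⁅Z₁, c₂ • D⁆ = c₂ • ⁅Z₁, D⁆ from lie_smul c₂ Z₁ D]
    refine n.add_mem ?_ (n.lie_mem hZ₁ hZ₂)
    refine n.smul_mem _ ?_
    rw [← lie_skew]
    exact n.neg_mem (lie_D_mem_nAlg α lam A hk hA Z₁ hZ₁)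

lemma h_toSubmodule_eq (hk : 0 < k) (hA : IsEShaped dv A) :
    Submodule.span F {Dmat dv α lam} ⊔ (nAlg F dv A).toSubmodule =
      (hAlg F dv α lam A).toSubmodule := by
  apply le_antisymm
  · apply sup_le
    · rw [Submodule.span_le, Set.singleton_subset_iff]
      exact LieSubalgebra.subset_lieSpan (Set.mem_insert_iff.mpr (Or.inl rfl))
    · intro x hx
      exact nAlg_le_h α lam A hk hA hx
  · set M := Submodule.span F {Dmat dv α lam} ⊔ (nAlg F dv A).toSubmodule with hM
    let HB : LieSubalgebra F (Matrix (Fin (dtot dv)) (Fin (dtot dv)) F) :=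
      { M with
        lie_mem' := by
          intro x y hx hy
          obtain ⟨c₁, Z₁, hZ₁, rfl⟩ := (mem_sup_decomp α lam A).mp hx
          obtain ⟨c₂, Z₂, hZ₂, rfl⟩ := (mem_sup_decomp α lam A).mp hy
          exact Submodule.mem_sup_right (lie_decomp_mem_n α lam A hk hA c₁ c₂ hZ₁ hZ₂) }
    have hle : hAlg F dv α lam A ≤ HB := by
      apply LieSubalgebra.lieSpan_le.mpr
      rintro X hX
      rcases hX with rfl | hX
      · exact Submodule.mem_sup_left (Submodule.mem_span_singleton_self _)
      · rw [Set.mem_singleton_iff] at hX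
        subst hX
        exact Submodule.mem_sup_right (LieSubalgebra.subset_lieSpan ⟨0, rfl⟩)
    intro x hx
    exact hle hx

lemma h_inf_n (hk : 0 < k) (hA : IsEShaped dv A) :
    Submodule.span F {Dmat dv α lam} ⊓ (nAlg F dv A).toSubmodule = ⊥ := by
  rw [eq_bot_iff]
  rintro x ⟨hx1, hx2⟩
  obtain ⟨c, rfl⟩ := Submodule.mem_span_singleton.mp hx1
  have hT := nAlg_mem_bw1 A hk hA hx2
  rw [Submodule.mem_bot]
  ext u v
  obtain ⟨i, r, rfl⟩ := cover hk u
  obtain ⟨j, s, rfl⟩ := cover hk v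
  rw [Matrix.zero_apply]
  by_cases hcase : (j : ℕ) < (i : ℕ) + 1
  · apply hT
    rw [bw_emb, bw_emb]
    exact hcase
  · rw [Matrix.smul_apply, Dmat_apply_ne α lam r s (by rintro rfl; omega), smul_zero]


end Main

end Blocks

section Solv

variable [Field F]

/-- the Borel subalgebra of upper triangular matrices -/
def Bor (d : ℕ) : LieSubalgebra F (Matrix (Fin d) (Fin d) F) :=
  { Wsub F (fun x : Fin d => (x : ℕ)) 0 with
    lie_mem' := fun {x y} hx hy => wsub_anti (by omega) (wsub_lie hx hy) }

lemma mem_Bor {d : ℕ} {X : Matrix (Fin d) (Fin d) F} :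
    X ∈ Bor (F := F) d ↔ X ∈ Wsub F (fun x : Fin d => (x : ℕ)) 0 := Iff.rfl

lemma bor_bracket_span {d : ℕ} (target : ℕ) (I : LieIdeal F ↥(Bor (F := F) d))
    (hgen : ∀ x y : ↥(Bor (F := F) d), x ∈ I → y ∈ I →
      ⁅(x : Matrix (Fin d) (Fin d) F), (y : Matrix (Fin d) (Fin d) F)⁆ ∈
        Wsub F (fun x : Fin d => (x : ℕ)) target) :
    ∀ X : ↥(Bor (F := F) d), X ∈ ⁅I, I⁆ →
      (X : Matrix (Fin d) (Fin d) F) ∈ Wsub F (fun x : Fin d => (x : ℕ)) target := by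
  intro X hX
  have h2 : X ∈ Submodule.span F {m : ↥(Bor (F := F) d) | ∃ x ∈ I, ∃ n ∈ I, ⁅x, n⁆ = m} := by
    rw [← LieSubmodule.lieIdeal_oper_eq_linear_span']
    exact hX
  clear hX
  induction h2 using Submodule.span_induction with
  | mem m hm =>
    obtain ⟨x, hx, n, hn, rfl⟩ := hm
    rw [LieSubalgebra.coe_bracket]
    exact hgen x n hx hn
  | zero => exact (Wsub F _ _).zero_mem
  | add x y hx hy ihx ihy => exact (Wsub F _ _).add_mem ihx ihy
  | smul c x hx ih => exact (Wsub F _ _).smul_mem c ih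

lemma bor_derived {d : ℕ} : ∀ (j : ℕ) (X : ↥(Bor (F := F) d)),
    X ∈ LieAlgebra.derivedSeries F ↥(Bor (F := F) d) (j + 1) →
    (X : Matrix (Fin d) (Fin d) F) ∈ Wsub F (fun x : Fin d => (x : ℕ)) (j + 1) := by
  have hds : ∀ m : ℕ, LieAlgebra.derivedSeries F ↥(Bor (F := F) d) (m + 1) =
      ⁅LieAlgebra.derivedSeries F ↥(Bor (F := F) d) m,
        LieAlgebra.derivedSeries F ↥(Bor (F := F) d) m⁆ := by
    intro m
    rw [LieAlgebra.derivedSeries_def, LieAlgebra.derivedSeriesOfIdeal_succ,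
      ← LieAlgebra.derivedSeries_def]
  intro j
  induction j with
  | zero =>
    intro X hX
    rw [hds 0] at hX
    refine bor_bracket_span 1 _ ?_ X hX
    intro x y _ _
    exact wsub_lie_diag (fun a b h => Fin.ext h) x.2 y.2
  | succ n ih =>
    intro X hX
    rw [hds (n + 1)] at hX
    refine bor_bracket_span (n + 2) _ ?_ X hX
    intro x y hx hy
    have h1 := ih x hx
    have h2 := ih y hy
    exact wsub_anti (by omega) (wsub_lie h1 h2)

lemma bor_solvable (d : ℕ) : LieAlgebra.IsSolvable ↥(Bor (F := F) d) := by
  refine (LieAlgebra.isSolvable_iff F _).mpr ⟨d + 2, ?_⟩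
  rw [eq_bot_iff]
  intro X hX
  have h1 := bor_derived (d + 1) X hX
  have h2 : (X : Matrix (Fin d) (Fin d) F) = 0 := by
    apply wsub_eq_zero _ h1
    intro x y
    have := y.isLt
    omega
  simp only [LieSubmodule.mem_bot]
  exact Subtype.ext h2

end Solv


section Nilp

variable [Field F] {k : ℕ} {dv : Fin k → ℕ}

lemma one_apply_emb {i j : Fin k} (r : Fin (dv i)) (s : Fin (dv j)) :
    (1 : Matrix (Fin (dtot dv)) (Fin (dtot dv)) F) (emb dv i r) (emb dv j s) =
      if h : i = j then (if (s : ℕ) = (r : ℕ) then 1 else 0) else 0 := by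
  rw [Matrix.one_apply]
  by_cases h : i = j
  · subst h
    rw [dif_pos rfl]
    by_cases h1 : (s : ℕ) = (r : ℕ)
    · rw [if_pos h1, if_pos (by rw [Fin.ext h1])]
    · rw [if_neg h1, if_neg (fun e => h1 (congrArg Fin.val (emb_right_inj e).symm))]
  · rw [dif_neg h, if_neg (fun e => h (emb_block_eq e))]

lemma Dmat_alpha_zero (hk : 0 < k) (α : F) :
    Dmat dv α 0 = α • (1 : Matrix (Fin (dtot dv)) (Fin (dtot dv)) F) + Dmat dv (0 : F) 0 := by
  ext x y
  obtain ⟨i, r, rfl⟩ := cover hk x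
  obtain ⟨j, s, rfl⟩ := cover hk y
  rw [Matrix.add_apply, Matrix.smul_apply, one_apply_emb]
  by_cases h : i = j
  · subst h
    rw [Dmat_apply_same, Dmat_apply_same, dif_pos rfl]
    unfold Jord
    simp only [Matrix.of_apply, smul_eq_mul]
    split_ifs <;> push_cast <;> ring
  · rw [Dmat_apply_ne _ _ _ _ h, Dmat_apply_ne _ _ _ _ h, dif_neg h, smul_zero, zero_add]

lemma hAlg_nilpotent (hk : 0 < k) (α : F)
    (A : Matrix (Fin (dtot dv)) (Fin (dtot dv)) F) (hA : IsEShaped dv A) :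
    LieRing.IsNilpotent ↥(hAlg F dv α (0 : F) A) := by
  have : IsNoetherian F ↥(hAlg F dv α (0 : F) A) := by infer_instance
  rw [LieAlgebra.isNilpotent_iff_forall (R := F)]
  intro x
  have hx : (x : Matrix (Fin (dtot dv)) (Fin (dtot dv)) F) ∈
      Submodule.span F {Dmat dv α (0 : F)} ⊔ (nAlg F dv A).toSubmodule := by
    rw [h_toSubmodule_eq α 0 A hk hA]
    exact x.2
  obtain ⟨c, Z, hZ, hxe⟩ := (mem_sup_decomp α 0 A).mp hx
  set N := c • Dmat dv (0 : F) 0 + Z with hN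
  have hsplit : (x : Matrix (Fin (dtot dv)) (Fin (dtot dv)) F) =
      (c * α) • (1 : Matrix (Fin (dtot dv)) (Fin (dtot dv)) F) + N := by
    rw [hxe, Dmat_alpha_zero hk α, smul_add, smul_smul, hN]
    abel
  have hN1 : N ∈ Wsub F (fun x : Fin (dtot dv) => (x : ℕ)) 1 :=
    (Wsub F _ 1).add_mem ((Wsub F _ 1).smul_mem c (Dmat00_mem_val1 hk))
      (bw1_le_val1 hk (nAlg_mem_bw1 A hk hA hZ))
  have hNnil : IsNilpotent N := by
    refine ⟨dtot dv, wsub_eq_zero (fun a b => ?_) (wsub_pow hN1 (dtot dv))⟩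
    have := b.isLt
    omega
  have hadN : IsNilpotent (LieAlgebra.ad F (Matrix (Fin (dtot dv)) (Fin (dtot dv)) F) N) :=
    LieAlgebra.ad_nilpotent_of_nilpotent (R := F) hNnil
  have hadeq : LieAlgebra.ad F (Matrix (Fin (dtot dv)) (Fin (dtot dv)) F)
      (x : Matrix (Fin (dtot dv)) (Fin (dtot dv)) F) =
      LieAlgebra.ad F (Matrix (Fin (dtot dv)) (Fin (dtot dv)) F) N := by
    ext W
    rw [LieAlgebra.ad_apply, LieAlgebra.ad_apply, hsplit, add_lie, smul_lie,
      show ⁅(1 : Matrix (Fin (dtot dv)) (Fin (dtot dv)) F), W⁆ = 0 from by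
        rw [Ring.lie_def]; simp,
      smul_zero, zero_add]
  obtain ⟨m, hm⟩ := hadN
  rw [← hadeq] at hm
  refine ⟨m, ?_⟩
  have key : ∀ (p : ℕ) (z : ↥(hAlg F dv α (0 : F) A)),
      ((((LieAlgebra.ad F ↥(hAlg F dv α (0 : F) A) x) ^ p) z :
          ↥(hAlg F dv α (0 : F) A)) : Matrix (Fin (dtot dv)) (Fin (dtot dv)) F) =
        ((LieAlgebra.ad F (Matrix (Fin (dtot dv)) (Fin (dtot dv)) F)
          (x : Matrix (Fin (dtot dv)) (Fin (dtot dv)) F)) ^ p)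
          (z : Matrix (Fin (dtot dv)) (Fin (dtot dv)) F) := by
    intro p
    induction p with
    | zero => intro z; simp
    | succ n ih =>
      intro z
      rw [pow_succ', pow_succ', Module.End.mul_apply, Module.End.mul_apply]
      rw [← ih z]
      rfl
  apply LinearMap.ext
  intro z
  have h1 := key m z
  rw [hm] at h1
  simp only [LinearMap.zero_apply] at h1 ⊢
  exact Subtype.ext (h1.trans (ZeroMemClass.coe_zero _).symm)

end Nilp

/-- Proposition `prop.struture`, parts (a),(b),(c):  `h(α,λ,S)` is solvable
(nilpotent if `λ = 0`), `n(S)` is a Lie ideal of `h(α,λ,S)`, and as a vector space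
`h(α,λ,S) = F·D(α,λ) ⊕ n(S)`. -/
theorem statement3 {F : Type*} [Field F] [CharZero F] {k : ℕ} (hk : 2 ≤ k)
    (dv : Fin k → ℕ) (hdv : ∀ i, 0 < dv i) (α lam : F)
    (A : Matrix (Fin (dtot dv)) (Fin (dtot dv)) F) (hA : IsEShaped dv A) :
    LieAlgebra.IsSolvable ↥(hAlg F dv α lam A) ∧
    (lam = 0 → LieRing.IsNilpotent ↥(hAlg F dv α lam A)) ∧
    (nAlg F dv A ≤ hAlg F dv α lam A ∧
      ∀ X ∈ hAlg F dv α lam A, ∀ Y ∈ nAlg F dv A, ⁅X, Y⁆ ∈ nAlg F dv A) ∧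
    (Submodule.span F {Dmat dv α lam} ⊔ (nAlg F dv A).toSubmodule =
        (hAlg F dv α lam A).toSubmodule ∧
      Submodule.span F {Dmat dv α lam} ⊓ (nAlg F dv A).toSubmodule = ⊥) := by
  have hk0 : 0 < k := by omega
  refine ⟨?_, ?_, ⟨nAlg_le_h α lam A hk0 hA, ?_⟩, h_toSubmodule_eq α lam A hk0 hA,
    h_inf_n α lam A hk0 hA⟩
  · -- solvable
    have hle : hAlg F dv α lam A ≤ Bor (F := F) (dtot dv) := by
      apply LieSubalgebra.lieSpan_le.mpr
      rintro X hX
      rcases hX with rfl | hX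
      · exact Dmat_mem_val0 hk0 α lam
      · rw [Set.mem_singleton_iff] at hX
        subst hX
        exact wsub_anti (by omega) (bw1_le_val1 hk0 (A_mem_bw1 hk0 hA))
    haveI := bor_solvable (F := F) (dtot dv)
    exact Function.Injective.lieAlgebra_isSolvable
      (f := LieSubalgebra.inclusion hle) (LieSubalgebra.inclusion_injective hle)
  · -- nilpotent if lam = 0
    rintro rfl
    exact hAlg_nilpotent hk0 α A hA
  · -- ideal property
    intro X hX Y hY
    have hX' : X ∈ Submodule.span F {Dmat dv α lam} ⊔ (nAlg F dv A).toSubmodule := by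
      rw [h_toSubmodule_eq α lam A hk0 hA]
      exact hX
    obtain ⟨c, Z, hZ, rfl⟩ := (mem_sup_decomp α lam A).mp hX'
    rw [add_lie, smul_lie]
    exact (nAlg F dv A).add_mem
      ((nAlg F dv A).smul_mem c (lie_D_mem_nAlg α lam A hk0 hA Y hY))
      ((nAlg F dv A).lie_mem hZ hY)

end Paper
end
end
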